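/- Let f : ℝ³ → ℝ be a Schwartz function with Fourier transform f̂(k) = ∫ e^{−ik·x} f(x) dx, let n ∈ ℝ³ be a unit vector, and for r > 0 set f_{n,r}(x) := (1/r) f((x − rn)/r). Then for every r > 0, ∫_{ℝ³} |k| · |n − ((k/|k|)·n)(k/|k|)|² · |f̂_{n,r}(k)|² dk = ∫_{ℝ³} |k| · |n − ((k/|k|)·n)(k/|k|)|² · |f̂(k)|² dk; i.e. this integral is independent of r. -/

import Mathlib

open MeasureTheory Filter Topology Real Set Metric
open scoped InnerProductSpace

noncomputable section

local notation "ℝ³" => EuclideanSpace ℝ (Fin 3)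

lemma finrank3 : Module.finrank ℝ ℝ³ = 3 := by
  simp [finrank_euclideanSpace]

/-- Fourier transform abbreviation. -/
def FT (f : SchwartzMap (EuclideanSpace ℝ (Fin 3)) ℝ) (k : ℝ³) : ℂ :=
  ∫ x : ℝ³, Complex.exp (-Complex.I * (⟪k, x⟫_ℝ : ℂ)) * ((f x : ℝ) : ℂ)

lemma inner_scaled (f : SchwartzMap (EuclideanSpace ℝ (Fin 3)) ℝ)
    (n : ℝ³) {r : ℝ} (hr : 0 < r) (k : ℝ³) :
    ‖∫ x : ℝ³, Complex.exp (-Complex.I * (⟪k, x⟫_ℝ : ℂ)) *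
        (((1 / r) * f ((1 / r) • (x - r • n)) : ℝ) : ℂ)‖
      = r ^ 2 * ‖FT f (r • k)‖ := by
  have h1 : (∫ x : ℝ³, Complex.exp (-Complex.I * (⟪k, x⟫_ℝ : ℂ)) *
        (((1 / r) * f ((1 / r) • (x - r • n)) : ℝ) : ℂ))
      = ∫ x : ℝ³, Complex.exp (-Complex.I * (⟪k, x + r • n⟫_ℝ : ℂ)) *
        (((1 / r) * f ((1 / r) • x) : ℝ) : ℂ) := by
    rw [← integral_add_right_eq_self
      (fun x : ℝ³ => Complex.exp (-Complex.I * (⟪k, x⟫_ℝ : ℂ)) *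
        (((1 / r) * f ((1 / r) • (x - r • n)) : ℝ) : ℂ)) (r • n)]
    simp
  rw [h1]
  have h2 : ∀ x : ℝ³, Complex.exp (-Complex.I * (⟪k, x + r • n⟫_ℝ : ℂ)) *
        (((1 / r) * f ((1 / r) • x) : ℝ) : ℂ)
      = Complex.exp (-Complex.I * (⟪k, r • n⟫_ℝ : ℂ)) *
        (Complex.exp (-Complex.I * (⟪k, x⟫_ℝ : ℂ)) *
          (((1 / r) * f ((1 / r) • x) : ℝ) : ℂ)) := by
    intro x
    rw [inner_add_right]
    push_cast
    rw [mul_add, Complex.exp_add]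
    ring
  simp_rw [h2]
  rw [integral_const_mul, norm_mul, Complex.norm_exp]
  have hre : (-Complex.I * (⟪k, r • n⟫_ℝ : ℂ)).re = 0 := by
    simp [Complex.mul_re]
  rw [hre, Real.exp_zero, one_mul]
  -- substitution x ↦ r⁻¹ • x
  have h3 : ∀ x : ℝ³, Complex.exp (-Complex.I * (⟪k, x⟫_ℝ : ℂ)) *
        (((1 / r) * f ((1 / r) • x) : ℝ) : ℂ)
      = (fun y : ℝ³ => Complex.exp (-Complex.I * (⟪r • k, y⟫_ℝ : ℂ)) *
          (((1 / r) * f y : ℝ) : ℂ)) (r⁻¹ • x) := by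
    intro x
    simp only [one_div, real_inner_smul_left, real_inner_smul_right]
    rw [inv_mul_cancel_left₀ hr.ne']
  simp_rw [h3]
  rw [Measure.integral_comp_inv_smul volume
    (fun y : ℝ³ => Complex.exp (-Complex.I * (⟪r • k, y⟫_ℝ : ℂ)) *
      (((1 / r) * f y : ℝ) : ℂ)) r, finrank3]
  have h4 : ∀ y : ℝ³, Complex.exp (-Complex.I * (⟪r • k, y⟫_ℝ : ℂ)) *
        (((1 / r) * f y : ℝ) : ℂ)
      = ((1 / r : ℝ) : ℂ) * (Complex.exp (-Complex.I * (⟪r • k, y⟫_ℝ : ℂ)) * ((f y : ℝ) : ℂ)) := by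
    intro y; push_cast; ring
  simp_rw [h4]
  rw [integral_const_mul]
  rw [norm_smul, norm_mul]
  simp only [norm_norm, Real.norm_eq_abs, Complex.norm_real]
  rw [abs_of_pos (pow_pos hr 3), abs_of_pos (by positivity : (0:ℝ) < 1 / r)]
  rw [show FT f (r • k) = ∫ x : ℝ³, Complex.exp (-Complex.I * (⟪r • k, x⟫_ℝ : ℂ)) *
    ((f x : ℝ) : ℂ) from rfl]
  field_simp
  rw [abs_of_pos (pow_pos hr 3)]

lemma dir_invariant (n : ℝ³) {r : ℝ} (hr : 0 < r) (k : ℝ³) :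
    ‖n - ⟪‖r • k‖⁻¹ • (r • k), n⟫_ℝ • (‖r • k‖⁻¹ • (r • k))‖
      = ‖n - ⟪‖k‖⁻¹ • k, n⟫_ℝ • (‖k‖⁻¹ • k)‖ := by
  have : ‖r • k‖⁻¹ • (r • k) = ‖k‖⁻¹ • k := by
    rcases eq_or_ne k 0 with rfl | hk
    · simp
    · rw [norm_smul, Real.norm_eq_abs, abs_of_pos hr, mul_inv, smul_smul]
      congr 1
      rw [mul_comm r⁻¹ ‖k‖⁻¹, mul_assoc, inv_mul_cancel₀ hr.ne', mul_one]
  rw [this]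

/-- The vacuum fluctuation exponent of the free electric field smeared with the scaled test
function `f_{n,r}(x) = (1/r) f((x − rn)/r)` is independent of `r`. -/
theorem stmt_12 (f : SchwartzMap (EuclideanSpace ℝ (Fin 3)) ℝ)
    (n : ℝ³) (hn : ‖n‖ = 1) :
    ∀ r : ℝ, 0 < r →
      (∫ k : ℝ³, ‖k‖ * ‖n - ⟪‖k‖⁻¹ • k, n⟫_ℝ • (‖k‖⁻¹ • k)‖ ^ 2 *
          ‖∫ x : ℝ³, Complex.exp (-Complex.I * (⟪k, x⟫_ℝ : ℂ)) *
            (((1 / r) * f ((1 / r) • (x - r • n)) : ℝ) : ℂ)‖ ^ 2)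
      = ∫ k : ℝ³, ‖k‖ * ‖n - ⟪‖k‖⁻¹ • k, n⟫_ℝ • (‖k‖⁻¹ • k)‖ ^ 2 *
          ‖∫ x : ℝ³, Complex.exp (-Complex.I * (⟪k, x⟫_ℝ : ℂ)) * ((f x : ℝ) : ℂ)‖ ^ 2 := by
  intro r hr
  set Φ : ℝ³ → ℝ := fun k =>
    ‖k‖ * ‖n - ⟪‖k‖⁻¹ • k, n⟫_ℝ • (‖k‖⁻¹ • k)‖ ^ 2 * ‖FT f k‖ ^ 2 with hΦ
  have key : ∀ k : ℝ³,
      ‖k‖ * ‖n - ⟪‖k‖⁻¹ • k, n⟫_ℝ • (‖k‖⁻¹ • k)‖ ^ 2 *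
        ‖∫ x : ℝ³, Complex.exp (-Complex.I * (⟪k, x⟫_ℝ : ℂ)) *
          (((1 / r) * f ((1 / r) • (x - r • n)) : ℝ) : ℂ)‖ ^ 2
      = r ^ 3 * Φ (r • k) := by
    intro k
    rw [inner_scaled f n hr k, hΦ]
    simp only
    rw [dir_invariant n hr k, norm_smul, Real.norm_eq_abs, abs_of_pos hr]
    ring
  simp_rw [key]
  rw [integral_const_mul,
    Measure.integral_comp_smul volume Φ r, finrank3, smul_eq_mul,
    abs_of_pos (by positivity : (0:ℝ) < (r ^ 3)⁻¹)]
  rw [← mul_assoc, mul_inv_cancel₀ (by positivity : (r:ℝ) ^ 3 ≠ 0), one_mul]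
  rfl
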